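/- Let A be a real q×p matrix, v ∈ ℝ^q, ψ a real q×s matrix, z ∈ {0,1}^s, u ∈ ℝ^p and b ∈ ℝ, and suppose U(z) is nonempty. Then ζᵀu ≤ b holds for every ζ ∈ U(z) if and only if there exist a constant M > 0, a vector π ∈ ℝ^q with π ≥ 0 and Aᵀπ = u, real numbers y_{i,j} ≥ 0 for all pairs (i,j) with ψ_{i,j} ≥ 0, and real numbers w_{i,j} ≥ 0 for all pairs (i,j) with ψ_{i,j} < 0, such that: Σ_i π_i (v_i + Σ_{j : ψ_{i,j} < 0} ψ_{i,j}) + Σ_{i,j : ψ_{i,j} ≥ 0} ψ_{i,j} y_{i,j} − Σ_{i,j : ψ_{i,j} < 0} ψ_{i,j} w_{i,j} ≤ b; y_{i,j} ≥ π_i − M(1 − z_j) for all (i,j) with ψ_{i,j} ≥ 0; and w_{i,j} ≥ π_i − M z_j for all (i,j) with ψ_{i,j} < 0. -/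

import Mathlib

lemma cone_cara {E : Type*} [AddCommGroup E] [Module ℝ E] {ι : Type*} [Fintype ι] (g : ι → E) :
    ∀ (N : ℕ) (lam : ι → ℝ), (Finset.univ.filter fun i => lam i ≠ 0).card ≤ N →
    (∀ i, 0 ≤ lam i) →
    ∃ mu : ι → ℝ, (∀ i, 0 ≤ mu i) ∧ ∑ i, mu i • g i = ∑ i, lam i • g i ∧
      LinearIndependent ℝ (fun i : {i // mu i ≠ 0} => g i) := by
  classical
  intro N
  induction N with
  | zero =>
    intro lam hcard _
    have hz : ∀ i, lam i = 0 := by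
      intro i
      by_contra h
      have : i ∈ Finset.univ.filter fun i => lam i ≠ 0 := by simp [h]
      have := Finset.card_pos.mpr ⟨i, this⟩
      omega
    refine ⟨lam, fun i => (hz i).ge, rfl, ?_⟩
    have : IsEmpty {i // lam i ≠ 0} := ⟨fun ⟨i, hi⟩ => hi (hz i)⟩
    exact linearIndependent_empty_type
  | succ N ih =>
    intro lam hcard hnn
    by_cases hli : LinearIndependent ℝ (fun i : {i // lam i ≠ 0} => g i)
    · exact ⟨lam, hnn, rfl, hli⟩
    · obtain ⟨c, hcsum, i₁, hi₁⟩ := Fintype.not_linearIndependent_iff.mp hli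
      -- extend c to Fin m
      set c' : ι → ℝ := fun i => if h : lam i ≠ 0 then c ⟨i, h⟩ else 0 with hc'
      have hc'sum : ∑ i, c' i • g i = 0 := by
        have e0 : ∑ i ∈ Finset.univ.filter (fun i => lam i ≠ 0), c' i • g i
            = ∑ i, c' i • g i := by
          apply Finset.sum_subset (Finset.subset_univ _)
          intro x _ hx
          simp only [Finset.mem_filter, Finset.mem_univ, true_and, not_not] at hx
          simp [hc', hx]
        have e1 : ∑ i ∈ Finset.univ.filter (fun i => lam i ≠ 0), c' i • g i
            = ∑ i : {i // lam i ≠ 0}, c' (i : ι) • g (i : ι) :=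
          Finset.sum_subtype _ (fun x => by simp) _
        have e2 : ∑ i : {i // lam i ≠ 0}, c' (i : ι) • g (i : ι)
            = ∑ i : {i // lam i ≠ 0}, c i • g (i : ι) := by
          apply Finset.sum_congr rfl
          intro i _
          congr 1
          simp [hc', i.2]
        rw [← e0, e1, e2, hcsum]
      have hc'supp : ∀ i, c' i ≠ 0 → lam i ≠ 0 := by
        intro i h
        by_contra h2
        exact h (by simp [hc', h2])
      -- get d with a positive entry
      obtain ⟨d, hdsum, hdsupp, i₂, hi₂⟩ :
          ∃ d : ι → ℝ, ∑ i, d i • g i = 0 ∧ (∀ i, d i ≠ 0 → lam i ≠ 0) ∧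
            ∃ i, 0 < d i := by
        have hc'i₁ : c' (i₁ : ι) ≠ 0 := by simp [hc', i₁.2, hi₁]
        rcases lt_or_gt_of_ne hc'i₁ with h | h
        · refine ⟨-c', by simp [hc'sum], fun i hi => hc'supp i (by simpa using hi), i₁, by simpa using h⟩
        · exact ⟨c', hc'sum, hc'supp, i₁, h⟩
      set F := Finset.univ.filter fun i => 0 < d i with hF
      have hFne : F.Nonempty := ⟨i₂, by simp [hF, hi₂]⟩
      obtain ⟨i₀, hi₀F, hmin⟩ := Finset.exists_min_image F (fun i => lam i / d i) hFne
      have hd₀ : 0 < d i₀ := by simpa [hF] using hi₀F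
      set t := lam i₀ / d i₀ with ht
      have ht0 : 0 ≤ t := div_nonneg (hnn i₀) hd₀.le
      set mu : ι → ℝ := fun i => lam i - t * d i with hmu
      have hmunn : ∀ i, 0 ≤ mu i := by
        intro i
        rcases le_or_gt (d i) 0 with h | h
        · have : t * d i ≤ 0 := mul_nonpos_of_nonneg_of_nonpos ht0 h
          simp only [hmu]; linarith [hnn i]
        · have hiF : i ∈ F := by simp [hF, h]
          have h2 := hmin i hiF
          simp only [hmu, sub_nonneg]
          rw [ht, div_mul_eq_mul_div, div_le_iff₀ hd₀]
          rw [ht, div_le_div_iff₀ hd₀ h] at h2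
          nlinarith
      have hmusum : ∑ i, mu i • g i = ∑ i, lam i • g i := by
        simp only [hmu, sub_smul, Finset.sum_sub_distrib, mul_smul, ← Finset.smul_sum, hdsum,
          smul_zero, sub_zero]
      have hmusupp : ∀ i, mu i ≠ 0 → lam i ≠ 0 := by
        intro i h
        by_contra h2
        rcases eq_or_ne (d i) 0 with h3 | h3
        · exact h (by simp [hmu, h2, h3])
        · exact (hdsupp i h3) h2
      have hmu₀ : mu i₀ = 0 := by
        simp only [hmu, ht]
        field_simp
        ring
      have hlam₀ : lam i₀ ≠ 0 := hdsupp i₀ (ne_of_gt hd₀)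
      have hss : (Finset.univ.filter fun i => mu i ≠ 0) ⊂ Finset.univ.filter fun i => lam i ≠ 0 := by
        constructor
        · intro i hi
          simp only [Finset.mem_filter] at *
          exact ⟨hi.1, hmusupp i hi.2⟩
        · intro hsub
          have := hsub (by simp [hlam₀] : i₀ ∈ Finset.univ.filter fun i => lam i ≠ 0)
          simp [hmu₀] at this
      have hcard' : (Finset.univ.filter fun i => mu i ≠ 0).card ≤ N := by
        have := Finset.card_lt_card hss
        omega
      obtain ⟨nu, h1, h2, h3⟩ := ih mu hcard' hmunn
      exact ⟨nu, h1, h2.trans hmusum, h3⟩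


lemma cone_closed {E : Type*} [NormedAddCommGroup E] [InnerProductSpace ℝ E]
    [FiniteDimensional ℝ E] {ι : Type*} [Fintype ι] (g : ι → E)
    (cara : ∀ lam : ι → ℝ, (∀ i, 0 ≤ lam i) →
      ∃ mu : ι → ℝ, (∀ i, 0 ≤ mu i) ∧ ∑ i, mu i • g i = ∑ i, lam i • g i ∧
        LinearIndependent ℝ (fun i : {i // mu i ≠ 0} => g i)) :
    IsClosed {x : E | ∃ lam : ι → ℝ, (∀ i, 0 ≤ lam i) ∧ x = ∑ i, lam i • g i} := by
  classical
  let L : (T : Finset ι) → ({i // i ∈ T} → ℝ) →ₗ[ℝ] E := fun T =>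
    { toFun := fun lam => ∑ i : {i // i ∈ T}, lam i • g i
      map_add' := by intro a b; simp [add_smul, Finset.sum_add_distrib]
      map_smul' := by intro r a; simp [mul_smul, Finset.smul_sum] }
  let S : (T : Finset ι) → Set E := fun T =>
    (L T) '' {lam : {i // i ∈ T} → ℝ | ∀ i, 0 ≤ lam i}
  have key : ∀ (T : Finset ι) (lam : {i // i ∈ T} → ℝ),
      (L T) lam = ∑ i, (fun i => if h : i ∈ T then lam ⟨i, h⟩ else 0) i • g i := by
    intro T lam
    show ∑ i : {i // i ∈ T}, lam i • g i = _
    rw [Finset.sum_congr rfl (fun (i : {i // i ∈ T}) (_ : i ∈ Finset.univ) =>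
      (by simp [i.2] : lam i • g (i : ι)
        = (fun k => if h : k ∈ T then lam ⟨k, h⟩ else 0) (i : ι) • g (i : ι)))]
    rw [← Finset.sum_subtype T (fun x => Iff.rfl)
      (fun i => (fun k => if h : k ∈ T then lam ⟨k, h⟩ else 0) i • g i)]
    apply Finset.sum_subset (Finset.subset_univ _)
    intro i _ hi
    simp [hi]
  have hSclosed : ∀ T : Finset ι, LinearIndependent ℝ (fun i : T => g i) →
      IsClosed (S T) := by
    intro T hT
    have hinj : LinearMap.ker (L T) = ⊥ := by
      rw [LinearMap.ker_eq_bot']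
      intro lam hlam
      funext i
      exact Fintype.linearIndependent_iff.mp hT lam hlam i
    have hemb := LinearMap.isClosedEmbedding_of_injective hinj
    apply hemb.isClosedMap
    have : {lam : {i // i ∈ T} → ℝ | ∀ i, 0 ≤ lam i} = ⋂ i, {lam | 0 ≤ lam i} := by
      ext lam; simp
    rw [this]
    exact isClosed_iInter fun i => isClosed_le continuous_const (continuous_apply i)
  have hset : {x : E | ∃ lam : ι → ℝ, (∀ i, 0 ≤ lam i) ∧ x = ∑ i, lam i • g i}
      = ⋃ T : {T : Finset ι // LinearIndependent ℝ (fun i : T => g i)}, S T.1 := by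
    ext x
    simp only [Set.mem_setOf_eq, Set.mem_iUnion]
    constructor
    · rintro ⟨lam, hnn, rfl⟩
      obtain ⟨mu, hmunn, hmusum, hmuli⟩ := cara lam hnn
      set T : Finset ι := Finset.univ.filter fun i => mu i ≠ 0 with hT
      have e : ∀ i : T, mu (i : ι) ≠ 0 := fun i => by
        have h2 := i.2
        simp only [hT, Finset.mem_filter, Finset.mem_univ, true_and] at h2
        exact h2
      have hli : LinearIndependent ℝ (fun i : T => g i) := by
        refine hmuli.comp (fun i : T => (⟨(i : ι), e i⟩ : {i // mu i ≠ 0})) ?_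
        intro a b hab
        exact Subtype.ext (by simpa using hab)
      refine ⟨⟨T, hli⟩, fun i => mu i, fun i => hmunn i, ?_⟩
      rw [key T (fun i => mu i), ← hmusum]
      apply Finset.sum_congr rfl
      intro i _
      congr 1
      by_cases h : i ∈ T
      · simp [h]
      · have : mu i = 0 := by
          by_contra hc
          exact h (by simp [hT, hc])
        simp [h, this]
    · rintro ⟨⟨T, hli⟩, lam, hnn, hx⟩
      exact ⟨fun i => if h : i ∈ T then lam ⟨i, h⟩ else 0,
        fun i => by
          by_cases h : i ∈ T
          · simpa [h] using hnn ⟨i, h⟩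
          · simp [h],
        by rw [← hx]; exact key T lam⟩
  rw [hset]
  exact isClosed_iUnion_of_finite fun T => hSclosed T.1 T.2

open scoped InnerProductSpace in
lemma farkas_coord {ι κ : Type*} [Fintype ι] [Fintype κ] (G : ι → κ → ℝ) (x : κ → ℝ) :
    (∃ lam : ι → ℝ, (∀ i, 0 ≤ lam i) ∧ ∀ j, x j = ∑ i, lam i * G i j) ∨
    (∃ y : κ → ℝ, (∀ i, 0 ≤ ∑ j, G i j * y j) ∧ ∑ j, x j * y j < 0) := by
  classical
  set E := EuclideanSpace ℝ κ
  set g : ι → E := fun i => (WithLp.equiv 2 (κ → ℝ)).symm (G i) with hg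
  set x' : E := (WithLp.equiv 2 (κ → ℝ)).symm x with hx'
  have happly : ∀ (lam : ι → ℝ) (j : κ), (∑ i, lam i • g i) j = ∑ i, lam i * G i j := by
    intro lam j
    rw [show ((∑ i, lam i • g i) j) = ∑ i, (lam i • g i) j from by
      induction (Finset.univ : Finset ι) using Finset.induction with
      | empty => simp
      | insert _ _ h ih => rw [Finset.sum_insert h, Finset.sum_insert h, ← ih]; rfl]
    apply Finset.sum_congr rfl
    intro i _
    show (lam i • (WithLp.equiv 2 (κ → ℝ)).symm (G i)) j = lam i * G i j
    rw [PiLp.smul_apply, WithLp.equiv_symm_apply, PiLp.toLp_apply, smul_eq_mul]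
  set C : Set E := {w : E | ∃ lam : ι → ℝ, (∀ i, 0 ≤ lam i) ∧ w = ∑ i, lam i • g i} with hC
  by_cases hmem : x' ∈ C
  · obtain ⟨lam, hnn, hsum⟩ := hmem
    left
    refine ⟨lam, hnn, fun j => ?_⟩
    have : x' j = (∑ i, lam i • g i) j := by rw [hsum]
    rw [happly] at this
    rwa [hx', WithLp.equiv_symm_apply, PiLp.toLp_apply] at this
  · right
    set K : ConvexCone ℝ E :=
      { carrier := C
        smul_mem' := by
          rintro c hc w ⟨lam, hnn, rfl⟩
          exact ⟨fun i => c * lam i, fun i => mul_nonneg hc.le (hnn i),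
            by rw [Finset.smul_sum]; exact Finset.sum_congr rfl fun i _ => (mul_smul _ _ _).symm⟩
        add_mem' := by
          rintro w ⟨lam, hnn, rfl⟩ w' ⟨lam', hnn', rfl⟩
          exact ⟨fun i => lam i + lam' i, fun i => add_nonneg (hnn i) (hnn' i),
            by rw [← Finset.sum_add_distrib]; exact Finset.sum_congr rfl fun i _ => (add_smul _ _ _).symm⟩ } with hK
    have hKne : (K : Set E).Nonempty := ⟨0, ⟨0, fun i => le_refl 0, by simp⟩⟩
    have hKclosed : IsClosed (K : Set E) :=
      cone_closed g (fun lam hnn => cone_cara g _ lam le_rfl hnn)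
    obtain ⟨y, hy1, hy2⟩ :=
      ProperCone.hyperplane_separation' (C := ({
          carrier := C
          add_mem' := fun ha hb => K.add_mem ha hb
          zero_mem' := ⟨0, fun _ => le_refl 0, by simp⟩
          smul_mem' := by
            rintro c w ⟨lam, hnn, rfl⟩
            exact ⟨fun i => (c : ℝ) * lam i, fun i => mul_nonneg c.2 (hnn i),
              by show (c : ℝ) • ∑ i, lam i • g i = _; rw [Finset.smul_sum]; exact Finset.sum_congr rfl fun i _ => (mul_smul _ _ _).symm⟩
          isClosed' := hKclosed } : ProperCone ℝ E)) hmem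
    have hgK : ∀ i, (g i) ∈ K := by
      intro i
      refine ⟨Pi.single i 1, fun k => by
        rcases eq_or_ne k i with rfl | h
        · simp
        · simp [Pi.single_eq_of_ne h], ?_⟩
      rw [Finset.sum_eq_single_of_mem i (Finset.mem_univ i)]
      · simp
      · intro k _ hk
        simp [Pi.single_eq_of_ne hk]
    refine ⟨fun j => y j, fun i => ?_, ?_⟩
    · have := hy1 (g i) (hgK i)
      rw [PiLp.inner_apply] at this
      simpa [hg, WithLp.equiv_symm_apply, PiLp.toLp_apply, RCLike.inner_apply, mul_comm] using this
    · rw [PiLp.inner_apply] at hy2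
      simpa [hx', WithLp.equiv_symm_apply, PiLp.toLp_apply, RCLike.inner_apply, mul_comm] using hy2

theorem stmt_2 (q p s : ℕ) (A : Matrix (Fin q) (Fin p) ℝ) (v : Fin q → ℝ)
    (ψ : Matrix (Fin q) (Fin s) ℝ) (z : Fin s → ℝ) (u : Fin p → ℝ) (b : ℝ)
    (hz : ∀ j, z j = 0 ∨ z j = 1)
    (hne : ∃ ζ : Fin p → ℝ, ∀ i, A.mulVec ζ i ≤ v i + ψ.mulVec z i) :
    (∀ ζ : Fin p → ℝ, (∀ i, A.mulVec ζ i ≤ v i + ψ.mulVec z i) →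
        ∑ k, ζ k * u k ≤ b) ↔
      (∃ M : ℝ, 0 < M ∧ ∃ π : Fin q → ℝ,
        ∃ y w : Matrix (Fin q) (Fin s) ℝ,
        (∀ i, 0 ≤ π i) ∧ (∀ j, ∑ i, A i j * π i = u j) ∧
        (∀ i j, 0 ≤ ψ i j → 0 ≤ y i j) ∧
        (∀ i j, ψ i j < 0 → 0 ≤ w i j) ∧
        (∑ i, π i * (v i + ∑ j ∈ Finset.univ.filter (fun j => ψ i j < 0), ψ i j)
            + ∑ i, ∑ j ∈ Finset.univ.filter (fun j => 0 ≤ ψ i j), ψ i j * y i j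
            - ∑ i, ∑ j ∈ Finset.univ.filter (fun j => ψ i j < 0), ψ i j * w i j
          ≤ b) ∧
        (∀ i j, 0 ≤ ψ i j → π i - M * (1 - z j) ≤ y i j) ∧
        (∀ i j, ψ i j < 0 → π i - M * z j ≤ w i j)) := by
  classical
  set c : Fin q → ℝ := fun i => v i + ψ.mulVec z i with hc
  have hmv : ∀ (ζ : Fin p → ℝ) i, A.mulVec ζ i = ∑ k, A i k * ζ k := by
    intro ζ i; simp [Matrix.mulVec, dotProduct]
  have hψz : ∀ i, ψ.mulVec z i = ∑ j, ψ i j * z j := by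
    intro i; simp [Matrix.mulVec, dotProduct]
  have hz0 : ∀ j, 0 ≤ z j := fun j => by rcases hz j with h | h <;> simp [h]
  have hz1 : ∀ j, z j ≤ 1 := fun j => by rcases hz j with h | h <;> simp [h]
  constructor
  · intro h
    rcases farkas_coord (ι := Fin q ⊕ Unit) (κ := Fin p ⊕ Unit)
        (Sum.elim (fun i => Sum.elim (A i) (fun _ => c i))
          (fun _ => Sum.elim (fun _ => (0:ℝ)) (fun _ => 1)))
        (Sum.elim u fun _ => b) with ⟨lam, hnn, hsum⟩ | ⟨Y, hy1, hy2⟩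
    · -- build the certificate
      set π : Fin q → ℝ := fun i => lam (.inl i) with hπdef
      have hπ : ∀ i, 0 ≤ π i := fun i => hnn _
      have hu : ∀ j, u j = ∑ i, π i * A i j := by
        intro j
        have := hsum (.inl j)
        simpa [Fintype.sum_sum_type] using this
      have hb : ∑ i, π i * c i ≤ b := by
        have := hsum (.inr ())
        simp [Fintype.sum_sum_type] at this
        have h0 := hnn (Sum.inr ())
        rw [this]
        simpa [hπdef] using h0
      refine ⟨∑ i, π i + 1, by have := Finset.sum_nonneg (fun i (_ : i ∈ Finset.univ) => hπ i); linarith, π,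
        Matrix.of fun i j => π i * z j, Matrix.of fun i j => π i * (1 - z j),
        hπ, ?_, ?_, ?_, ?_, ?_, ?_⟩
      · intro j
        rw [hu j]
        exact Finset.sum_congr rfl fun i _ => mul_comm _ _
      · intro i j _
        exact mul_nonneg (hπ i) (hz0 j)
      · intro i j _
        exact mul_nonneg (hπ i) (by linarith [hz1 j])
      · -- main inequality: equals ∑ π c
        have key : ∀ i, π i * (v i + ∑ j ∈ Finset.univ.filter (fun j => ψ i j < 0), ψ i j)
            + ∑ j ∈ Finset.univ.filter (fun j => 0 ≤ ψ i j), ψ i j * (π i * z j)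
            - ∑ j ∈ Finset.univ.filter (fun j => ψ i j < 0), ψ i j * (π i * (1 - z j))
            = π i * c i := by
          intro i
          have hci : c i = v i + ∑ j, ψ i j * z j := by rw [hc]; simp [hψz]
          rw [hci, Finset.sum_filter, Finset.sum_filter, Finset.sum_filter,
            mul_add, mul_add, Finset.mul_sum, Finset.mul_sum]
          rw [add_assoc, ← Finset.sum_add_distrib, add_sub_assoc, ← Finset.sum_sub_distrib]
          congr 1
          apply Finset.sum_congr rfl
          intro j _
          by_cases hj : 0 ≤ ψ i j
          · simp only [hj, if_true, not_lt.mpr hj, if_false]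
            ring
          · simp only [hj, if_false, not_le.mp hj, if_true]
            ring
        calc ∑ i, π i * (v i + ∑ j ∈ Finset.univ.filter (fun j => ψ i j < 0), ψ i j)
            + ∑ i, ∑ j ∈ Finset.univ.filter (fun j => 0 ≤ ψ i j), ψ i j * (Matrix.of fun i j => π i * z j) i j
            - ∑ i, ∑ j ∈ Finset.univ.filter (fun j => ψ i j < 0), ψ i j * (Matrix.of fun i j => π i * (1 - z j)) i j
            = ∑ i, (π i * (v i + ∑ j ∈ Finset.univ.filter (fun j => ψ i j < 0), ψ i j)
              + ∑ j ∈ Finset.univ.filter (fun j => 0 ≤ ψ i j), ψ i j * (π i * z j)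
              - ∑ j ∈ Finset.univ.filter (fun j => ψ i j < 0), ψ i j * (π i * (1 - z j))) := by
              rw [← Finset.sum_add_distrib, ← Finset.sum_sub_distrib]
              rfl
          _ = ∑ i, π i * c i := Finset.sum_congr rfl fun i _ => key i
          _ ≤ b := hb
      · intro i j _
        show π i - (∑ i, π i + 1) * (1 - z j) ≤ π i * z j
        have hle : π i ≤ ∑ i, π i := Finset.single_le_sum (fun i _ => hπ i) (Finset.mem_univ i)
        rcases hz j with h | h <;> rw [h] <;> nlinarith
      · intro i j _
        show π i - (∑ i, π i + 1) * z j ≤ π i * (1 - z j)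
        have hle : π i ≤ ∑ i, π i := Finset.single_le_sum (fun i _ => hπ i) (Finset.mem_univ i)
        rcases hz j with h | h <;> rw [h] <;> nlinarith
    · -- contradiction with robustness
      exfalso
      set ζ : Fin p → ℝ := fun k => Y (.inl k) with hζdef
      set r : ℝ := Y (.inr ()) with hrdef
      have hr : 0 ≤ r := by
        have := hy1 (.inr ())
        simpa [Fintype.sum_sum_type] using this
      have hAc : ∀ i, 0 ≤ (∑ k, A i k * ζ k) + c i * r := by
        intro i
        have := hy1 (.inl i)
        simpa [Fintype.sum_sum_type] using this
      have hlt : (∑ k, u k * ζ k) + b * r < 0 := by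
        have := hy2
        simpa [Fintype.sum_sum_type] using this
      obtain ⟨ζ₀, hζ₀⟩ := hne
      rcases hr.eq_or_lt with heq | hpos
      · -- r = 0
        have hA0 : ∀ i, 0 ≤ ∑ k, A i k * ζ k := by
          intro i; have := hAc i; rw [← heq] at this; simpa using this
        have hs : (∑ k, u k * ζ k) < 0 := by
          rw [← heq] at hlt; simpa using hlt
        set s₀ : ℝ := ∑ k, ζ₀ k * u k with hs₀
        have hs₀b : s₀ ≤ b := h ζ₀ hζ₀
        set t : ℝ := (b + 1 - s₀) / (-(∑ k, u k * ζ k)) with htdef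
        have ht : 0 < t := div_pos (by linarith) (by linarith)
        have hfeas : ∀ i, A.mulVec (fun k => ζ₀ k - t * ζ k) i ≤ v i + ψ.mulVec z i := by
          intro i
          rw [hmv]
          have : ∑ k, A i k * (ζ₀ k - t * ζ k)
              = (∑ k, A i k * ζ₀ k) - t * ∑ k, A i k * ζ k := by
            rw [Finset.mul_sum, ← Finset.sum_sub_distrib]
            exact Finset.sum_congr rfl fun k _ => by ring
          rw [this]
          have h1 := hζ₀ i
          rw [hmv] at h1
          nlinarith [mul_nonneg ht.le (hA0 i)]
        have := h _ hfeas
        have hexp : ∑ k, (ζ₀ k - t * ζ k) * u k = s₀ - t * ∑ k, u k * ζ k := by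
          rw [hs₀, Finset.mul_sum, ← Finset.sum_sub_distrib]
          exact Finset.sum_congr rfl fun k _ => by ring
        rw [hexp] at this
        have hts : t * (-(∑ k, u k * ζ k)) = b + 1 - s₀ := by
          rw [htdef]
          exact div_mul_cancel₀ _ (by linarith)
        rw [mul_neg] at hts
        linarith
      · -- r > 0
        have hfeas : ∀ i, A.mulVec (fun k => -(ζ k) / r) i ≤ v i + ψ.mulVec z i := by
          intro i
          rw [hmv]
          have : ∑ k, A i k * (-(ζ k) / r) = -(∑ k, A i k * ζ k) / r := by
            rw [neg_div, Finset.sum_div, ← Finset.sum_neg_distrib]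
            exact Finset.sum_congr rfl fun k _ => by ring
          rw [this]
          have := hAc i
          rw [div_le_iff₀ hpos]
          show -(∑ k, A i k * ζ k) ≤ c i * r
          linarith
        have h2 := h _ hfeas
        have hexp : ∑ k, (-(ζ k) / r) * u k = -(∑ k, u k * ζ k) / r := by
          rw [neg_div, Finset.sum_div, ← Finset.sum_neg_distrib]
          exact Finset.sum_congr rfl fun k _ => by ring
        rw [hexp] at h2
        rw [div_le_iff₀ hpos] at h2
        nlinarith
  · rintro ⟨M, hM, π, y, w, hπ, hAπ, hynn, hwnn, hmain, hyM, hwM⟩ ζ hζ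
    have step1 : ∑ k, ζ k * u k = ∑ i, π i * A.mulVec ζ i := by
      calc ∑ k, ζ k * u k = ∑ k, ∑ i, ζ k * (A i k * π i) := by
            refine Finset.sum_congr rfl fun k _ => ?_
            rw [← hAπ k, Finset.mul_sum]
        _ = ∑ i, ∑ k, ζ k * (A i k * π i) := Finset.sum_comm
        _ = ∑ i, π i * A.mulVec ζ i := by
            refine Finset.sum_congr rfl fun i _ => ?_
            rw [hmv, Finset.mul_sum]
            exact Finset.sum_congr rfl fun k _ => by ring
    have step2 : ∑ i, π i * A.mulVec ζ i ≤ ∑ i, π i * (v i + ψ.mulVec z i) :=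
      Finset.sum_le_sum fun i _ => mul_le_mul_of_nonneg_left (hζ i) (hπ i)
    have step3 : ∑ i, π i * (v i + ψ.mulVec z i) ≤
        ∑ i, (π i * (v i + ∑ j ∈ Finset.univ.filter (fun j => ψ i j < 0), ψ i j)
          + ∑ j ∈ Finset.univ.filter (fun j => 0 ≤ ψ i j), ψ i j * y i j
          - ∑ j ∈ Finset.univ.filter (fun j => ψ i j < 0), ψ i j * w i j) := by
      apply Finset.sum_le_sum
      intro i _
      rw [hψz]
      rw [Finset.sum_filter, Finset.sum_filter, Finset.sum_filter,
        mul_add, mul_add, Finset.mul_sum, Finset.mul_sum]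
      rw [add_assoc, ← Finset.sum_add_distrib, add_sub_assoc, ← Finset.sum_sub_distrib]
      apply add_le_add le_rfl
      apply Finset.sum_le_sum
      intro j _
      by_cases hj : 0 ≤ ψ i j
      · simp only [hj, if_true, not_lt.mpr hj, if_false]
        rcases hz j with h0 | h1
        · rw [h0]
          have := hynn i j hj
          nlinarith
        · rw [h1]
          have h2 := hyM i j hj
          rw [h1] at h2
          nlinarith
      · have hj' := not_le.mp hj
        simp only [hj, if_false, hj', if_true]
        rcases hz j with h0 | h1
        · rw [h0]
          have h2 := hwM i j hj'
          rw [h0] at h2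
          nlinarith
        · rw [h1]
          have := hwnn i j hj'
          nlinarith
    have step4 : ∑ i, (π i * (v i + ∑ j ∈ Finset.univ.filter (fun j => ψ i j < 0), ψ i j)
          + ∑ j ∈ Finset.univ.filter (fun j => 0 ≤ ψ i j), ψ i j * y i j
          - ∑ j ∈ Finset.univ.filter (fun j => ψ i j < 0), ψ i j * w i j)
        = ∑ i, π i * (v i + ∑ j ∈ Finset.univ.filter (fun j => ψ i j < 0), ψ i j)
            + ∑ i, ∑ j ∈ Finset.univ.filter (fun j => 0 ≤ ψ i j), ψ i j * y i j
            - ∑ i, ∑ j ∈ Finset.univ.filter (fun j => ψ i j < 0), ψ i j * w i j := by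
      rw [← Finset.sum_add_distrib, ← Finset.sum_sub_distrib]
    linarith [step1, step2, step3, step4, hmain]
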